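/- arXiv:2202.06586 — 3 statements merged into one kernel-verified Lean document; each statement's English description precedes it below -/
import Mathlib

section
/- Let H be a Hilbert space, A a self-adjoint operator on H, B a bounded self-adjoint nonnegative operator with B ≤ A + M for some constant M ≥ 0 (in the sense of quadratic forms). Then for z ∈ ℂ \ ℝ, ‖B(A - z)^{-1}‖ ≤ ‖B‖^{1/2} · ‖B^{1/2}(A - z)^{-1}‖, and ‖B^{1/2}(A - z)^{-1}‖ is bounded by a constant depending only on z and M. -/
open scoped InnerProductSpace

/-- let `A` be a self-adjoint (generally unbounded) operator on a Hilbert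
space `H`, `B` a bounded self-adjoint nonnegative operator with `B ≤ A + M` in the sense of
quadratic forms (`M ≥ 0`), and `S = B^{1/2}` its square root.  Then for `z ∉ ℝ`, with
`R = (A - z)⁻¹` the resolvent, one has `‖B R‖ ≤ ‖B‖^{1/2} ‖S R‖`, and `‖S R‖` is bounded by
a constant `C` depending only on `z` and `M`. -/
theorem stmt_10 (z : ℂ) (hz : z.im ≠ 0) (M : ℝ) (hM : 0 ≤ M) :
    ∃ C : ℝ, 0 < C ∧
      ∀ (H : Type) [NormedAddCommGroup H] [InnerProductSpace ℂ H] [CompleteSpace H]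
        (A : H →ₗ.[ℂ] H) (B S R : H →L[ℂ] H),
        IsSelfAdjoint A →
        IsSelfAdjoint B →
        (∀ x : H, 0 ≤ (⟪x, B x⟫_ℂ).re) →
        (∀ x : A.domain, (⟪(x : H), B x⟫_ℂ).re ≤ (⟪(x : H), A x⟫_ℂ).re + M * ‖(x : H)‖ ^ 2) →
        IsSelfAdjoint S →
        (∀ x : H, 0 ≤ (⟪x, S x⟫_ℂ).re) →
        S ∘L S = B →
        (∀ y : H, ∃ hy : R y ∈ A.domain, A ⟨R y, hy⟩ - z • R y = y) →
        (∀ x : A.domain, R (A x - z • (x : H)) = (x : H)) →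
        ‖B ∘L R‖ ≤ Real.sqrt ‖B‖ * ‖S ∘L R‖ ∧ ‖S ∘L R‖ ≤ C := by
  set k : ℝ := |z.im|⁻¹ with hk
  have hkpos : 0 < k := by positivity
  set K : ℝ := k + (|z.re| + M) * k ^ 2 with hKdef
  have hKpos : 0 < K := by positivity
  refine ⟨Real.sqrt K + 1, by positivity, ?_⟩
  intro H _ _ _ A B S R hA hB hBpos hform hS hSpos hSS hR1 hR2
  -- symmetry of A
  have hAd : A.adjoint = A := hA
  have hsymA : ∀ x y : A.domain, ⟪A x, (y : H)⟫_ℂ = ⟪(x : H), A y⟫_ℂ := by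
    have hd := hA.dense_domain
    have h1 := LinearPMap.adjoint_isFormalAdjoint (T := A) hd
    rw [hAd] at h1
    exact h1
  -- resolvent bound
  have hres : ∀ y : H, ‖R y‖ ≤ k * ‖y‖ := by
    intro y
    obtain ⟨hy, heq⟩ := hR1 y
    set x : A.domain := ⟨R y, hy⟩ with hxdef
    have hxA : (⟪(x : H), A x⟫_ℂ).im = 0 := by
      have h1 : (starRingEnd ℂ) (⟪(x : H), A x⟫_ℂ) = ⟪(x : H), A x⟫_ℂ := by
        rw [inner_conj_symm]; exact hsymA x x
      exact Complex.conj_eq_iff_im.mp h1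
    have hiy : ⟪(x : H), y⟫_ℂ = ⟪(x : H), A x⟫_ℂ - z * ⟪(x : H), (x : H)⟫_ℂ := by
      have h0 : (y : H) = A x - z • (x : H) := by rw [← heq]
      rw [h0, inner_sub_right, inner_smul_right]
    have hxx : ⟪(x : H), (x : H)⟫_ℂ = (‖(x : H)‖ ^ 2 : ℝ) := by
      rw [inner_self_eq_norm_sq_to_K]; norm_num
    have him : (⟪(x : H), y⟫_ℂ).im = -(z.im * ‖(x : H)‖ ^ 2) := by
      rw [hiy, Complex.sub_im, Complex.mul_im, hxA, hxx]
      simp only [← Complex.ofReal_pow, Complex.ofReal_re, Complex.ofReal_im]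
      ring
    have hle : |z.im| * ‖(x : H)‖ ^ 2 ≤ ‖(x : H)‖ * ‖y‖ := by
      have h1 : |z.im| * ‖(x : H)‖ ^ 2 = |(⟪(x : H), y⟫_ℂ).im| := by
        rw [him, abs_neg, abs_mul, abs_of_nonneg (by positivity : (0:ℝ) ≤ ‖(x:H)‖ ^ 2)]
      rw [h1]
      exact (Complex.abs_im_le_norm _).trans
        (norm_inner_le_norm (𝕜 := ℂ) (x : H) y)
    have hxRy : (x : H) = R y := rfl
    rw [← hxRy]
    rcases eq_or_lt_of_le (norm_nonneg (x : H)) with h0 | h0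
    · rw [← h0]; positivity
    · have h2 : |z.im| * ‖(x : H)‖ ≤ ‖y‖ := by
        have := hle
        rw [pow_two] at this
        nlinarith
      calc ‖(x : H)‖ = k * (|z.im| * ‖(x : H)‖) := by
            rw [hk, inv_mul_cancel_left₀ (abs_ne_zero.mpr hz)]
        _ ≤ k * ‖y‖ := by
            exact mul_le_mul_of_nonneg_left h2 (le_of_lt hkpos)
  -- symmetry of S
  have hsymS : ∀ u v : H, ⟪S u, v⟫_ℂ = ⟪u, S v⟫_ℂ := fun u v => hS.isSymmetric u v
  -- key quadratic bound
  have hkey : ∀ y : H, ‖S (R y)‖ ^ 2 ≤ K * ‖y‖ ^ 2 := by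
    intro y
    obtain ⟨hy, heq⟩ := hR1 y
    set x : A.domain := ⟨R y, hy⟩ with hxdef
    have hxRy : (x : H) = R y := rfl
    have h1 : (‖S (R y)‖ : ℝ) ^ 2 = (⟪R y, B (R y)⟫_ℂ).re := by
      have : ⟪S (R y), S (R y)⟫_ℂ = ⟪R y, B (R y)⟫_ℂ := by
        rw [hsymS, ← hSS]; rfl
      rw [← this, inner_self_eq_norm_sq_to_K]
      norm_cast
    have h2 : (⟪(x : H), B (x : H)⟫_ℂ).re ≤ (⟪(x : H), A x⟫_ℂ).re + M * ‖(x : H)‖ ^ 2 :=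
      hform x
    have hiy : ⟪(x : H), A x⟫_ℂ = ⟪(x : H), y⟫_ℂ + z * ⟪(x : H), (x : H)⟫_ℂ := by
      have hy' : (y : H) = A x - z • (x : H) := by rw [← heq]
      rw [hy', inner_sub_right, inner_smul_right]
      ring
    have hxx : ⟪(x : H), (x : H)⟫_ℂ = (‖(x : H)‖ ^ 2 : ℝ) := by
      rw [inner_self_eq_norm_sq_to_K]; norm_num
    have h3 : (⟪(x : H), A x⟫_ℂ).re ≤ ‖(x : H)‖ * ‖y‖ + |z.re| * ‖(x : H)‖ ^ 2 := by
      rw [hiy, Complex.add_re, Complex.mul_re, hxx]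
      simp only [← Complex.ofReal_pow, Complex.ofReal_re, Complex.ofReal_im]
      have h4 : (⟪(x : H), y⟫_ℂ).re ≤ ‖(x : H)‖ * ‖y‖ :=
        (Complex.re_le_norm _).trans
          (norm_inner_le_norm (𝕜 := ℂ) (x : H) y)
      have h5 : z.re * ‖(x : H)‖ ^ 2 ≤ |z.re| * ‖(x : H)‖ ^ 2 :=
        mul_le_mul_of_nonneg_right (le_abs_self _) (by positivity)
      nlinarith
    have hxb : ‖(x : H)‖ ≤ k * ‖y‖ := by rw [hxRy]; exact hres y
    have hxb2 : ‖(x : H)‖ ^ 2 ≤ k ^ 2 * ‖y‖ ^ 2 := by nlinarith [norm_nonneg (x : H), norm_nonneg y]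
    rw [h1, ← hxRy]
    have habM : 0 ≤ |z.re| + M := by positivity
    calc (⟪(x : H), B (x : H)⟫_ℂ).re
        ≤ ‖(x : H)‖ * ‖y‖ + (|z.re| + M) * ‖(x : H)‖ ^ 2 := by nlinarith
      _ ≤ k * ‖y‖ * ‖y‖ + (|z.re| + M) * (k ^ 2 * ‖y‖ ^ 2) := by
          have := mul_le_mul_of_nonneg_right hxb (norm_nonneg y)
          nlinarith [norm_nonneg y]
      _ = K * ‖y‖ ^ 2 := by rw [hKdef]; ring
  -- bound on ‖S ∘L R‖
  have hSR : ‖S ∘L R‖ ≤ Real.sqrt K := by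
    apply ContinuousLinearMap.opNorm_le_bound _ (Real.sqrt_nonneg K)
    intro y
    calc ‖(S ∘L R) y‖ = Real.sqrt (‖S (R y)‖ ^ 2) := by
          rw [Real.sqrt_sq (norm_nonneg _)]; rfl
      _ ≤ Real.sqrt (K * ‖y‖ ^ 2) := Real.sqrt_le_sqrt (hkey y)
      _ = Real.sqrt K * ‖y‖ := by
          rw [Real.sqrt_mul hKpos.le, Real.sqrt_sq (norm_nonneg y)]
  constructor
  · -- first part
    have hnormS : Real.sqrt ‖B‖ = ‖S‖ := by
      have h1 := ContinuousLinearMap.norm_adjoint_comp_self S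
      rw [hS.adjoint_eq] at h1
      rw [← hSS, h1, ← pow_two, Real.sqrt_sq (norm_nonneg S)]
    have hcomp : B ∘L R = S ∘L (S ∘L R) := by rw [← hSS]; rfl
    rw [hcomp, hnormS]
    exact ContinuousLinearMap.opNorm_comp_le _ _
  · linarith
end

section
/- Let V : ℝ^ν → ℝ be bounded below, ℓ ∈ (0,1], and let H₂ = -Δ_d + V on ℓ²(ℓℤ^ν) (with V acting by multiplication by V(j) at lattice point j), which is self-adjoint. Then for each z ∈ ℂ \ ℝ there is C > 0 independent of ℓ such that ‖Δ_d(H₂ - z)^{-1}‖ ≤ Cℓ^{-1} and ‖V(H₂ - z)^{-1}‖ ≤ Cℓ^{-1}. -/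
/-- The Hilbert space `ℓ²(ℤ^ν, ℂ)`, modelling `ℓ²(ℓℤ^ν)` (whose norm differs from this one
only by the constant factor `ℓ^{ν/2}`, which affects no operator norm nor any of the
inequalities below, since it appears on both sides). -/
abbrev LatticeL2 (ν : ℕ) : Type := lp (fun _ : Fin ν → ℤ => ℂ) 2

/-- The pointwise discrete Laplacian with lattice spacing `ℓ`:
`(Δ_d u)_j = ℓ^{-2} Σ_{|n-j|=ℓ} (u_n - u_j)`, the sum over the `2ν` nearest neighbours. -/
noncomputable def discreteLapPt (ν : ℕ) (ℓ : ℝ) (u : (Fin ν → ℤ) → ℂ) (j : Fin ν → ℤ) : ℂ :=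
  (ℓ ^ 2)⁻¹ * ∑ i : Fin ν,
    ((u (j + Pi.single i 1) - u j) + (u (j - Pi.single i 1) - u j))

/-- The pointwise discrete Schrödinger operator `H₂ = -Δ_d + V` on the lattice `ℓℤ^ν`;
the multiplication potential at the lattice point `j ∈ ℤ^ν` is `V(ℓj)`. -/
noncomputable def discreteSchrodingerPt (ν : ℕ) (ℓ : ℝ) (V : (Fin ν → ℝ) → ℝ)
    (u : (Fin ν → ℤ) → ℂ) (j : Fin ν → ℤ) : ℂ :=
  -discreteLapPt ν ℓ u j + (V (fun i => ℓ * (j i : ℝ)) : ℂ) * u j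

open scoped ComplexInnerProductSpace ENNReal
set_option maxHeartbeats 1000000

namespace Stmt11Aux

variable {ν : ℕ}

lemma memℓp_shift (ψ : LatticeL2 ν) (e : Fin ν → ℤ) :
    Memℓp (fun j : Fin ν → ℤ => ψ (j + e)) 2 := by
  apply memℓp_gen
  exact ((Equiv.addRight e).summable_iff).mpr ((lp.memℓp ψ).summable (by norm_num))

noncomputable def shift (e : Fin ν → ℤ) (ψ : LatticeL2 ν) : LatticeL2 ν :=
  ⟨fun j => ψ (j + e), memℓp_shift ψ e⟩

@[simp] lemma shift_apply (e : Fin ν → ℤ) (ψ : LatticeL2 ν) (j : Fin ν → ℤ) :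
    (shift e ψ : (Fin ν → ℤ) → ℂ) j = ψ (j + e) := rfl

lemma norm_shift (e : Fin ν → ℤ) (ψ : LatticeL2 ν) : ‖shift e ψ‖ = ‖ψ‖ := by
  rw [lp.norm_eq_tsum_rpow (by norm_num) (shift e ψ), lp.norm_eq_tsum_rpow (by norm_num) ψ]
  congr 1
  exact (Equiv.addRight e).tsum_eq (fun j => ‖ψ j‖ ^ (2 : ℝ≥0∞).toReal)

lemma inner_shift_neg (ψ u : LatticeL2 ν) (e : Fin ν → ℤ) :
    ⟪ψ, shift (-e) u⟫ = ⟪shift e ψ, u⟫ := by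
  rw [lp.inner_eq_tsum, lp.inner_eq_tsum]
  simp only [RCLike.inner_apply, shift_apply]
  have := (Equiv.addRight e).tsum_eq
    (fun j => (starRingEnd ℂ) ((ψ : (Fin ν → ℤ) → ℂ) j) * ((u : (Fin ν → ℤ) → ℂ) (j + -e)))
  simp only [Equiv.coe_addRight, add_neg_cancel_right] at this
  simp only [mul_comm ((u : (Fin ν → ℤ) → ℂ) _)]
  exact this.symm

/-- The forward difference operator in direction `i`. -/
noncomputable def diffOp (i : Fin ν) (ψ : LatticeL2 ν) : LatticeL2 ν :=
  shift (Pi.single i 1) ψ - ψ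

lemma diffOp_apply (i : Fin ν) (ψ : LatticeL2 ν) (j : Fin ν → ℤ) :
    (diffOp i ψ : (Fin ν → ℤ) → ℂ) j = ψ (j + Pi.single i 1) - ψ j := by
  simp [diffOp, lp.coeFn_sub]

/-- `-Δ_d` as a map on `ℓ²`. -/
noncomputable def negLap (ℓ : ℝ) (ψ : LatticeL2 ν) : LatticeL2 ν :=
  ((ℓ : ℂ) ^ 2)⁻¹ • ∑ i : Fin ν, (shift (-(Pi.single i 1)) (diffOp i ψ) - diffOp i ψ)

lemma negLap_apply (ℓ : ℝ) (ψ : LatticeL2 ν) (j : Fin ν → ℤ) :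
    (negLap ℓ ψ : (Fin ν → ℤ) → ℂ) j = -discreteLapPt ν ℓ (ψ : (Fin ν → ℤ) → ℂ) j := by
  have h1 : (negLap ℓ ψ : (Fin ν → ℤ) → ℂ) j
      = ((ℓ : ℂ) ^ 2)⁻¹ * ∑ i : Fin ν,
        ((diffOp i ψ : (Fin ν → ℤ) → ℂ) (j + -(Pi.single i 1))
          - (diffOp i ψ : (Fin ν → ℤ) → ℂ) j) := by
    rw [negLap, lp.coeFn_smul, Pi.smul_apply, smul_eq_mul]
    congr 1
    rw [lp.coeFn_sum]
    simp only [Finset.sum_apply, lp.coeFn_sub, Pi.sub_apply, shift_apply]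
  rw [h1]
  simp only [diffOp_apply, discreteLapPt]
  rw [neg_mul_eq_mul_neg, ← Finset.sum_neg_distrib]
  push_cast
  congr 1
  apply Finset.sum_congr rfl
  intro i _
  have h2 : j + -(Pi.single i 1) = j - Pi.single i 1 := by abel
  rw [h2]
  have h3 : j - Pi.single i 1 + Pi.single i 1 = j := by abel
  rw [h3]
  ring

lemma inner_negLap (ℓ : ℝ) (ψ : LatticeL2 ν) :
    ⟪ψ, negLap ℓ ψ⟫ = ((ℓ : ℂ) ^ 2)⁻¹ * ((∑ i : Fin ν, ‖diffOp i ψ‖ ^ 2 : ℝ) : ℂ) := by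
  rw [negLap, inner_smul_right, inner_sum]
  push_cast
  congr 1
  apply Finset.sum_congr rfl
  intro i _
  rw [inner_sub_right, inner_shift_neg, ← inner_sub_left]
  rw [show shift (Pi.single i 1) ψ - ψ = diffOp i ψ from rfl]
  rw [inner_self_eq_norm_sq_to_K]
  norm_num

lemma norm_sq_eq_tsum (f : LatticeL2 ν) :
    ‖f‖ ^ 2 = ∑' j, ‖f j‖ ^ 2 := by
  have h := lp.norm_rpow_eq_tsum (p := 2) (by norm_num) f
  have h2 : ((2 : ℝ≥0∞).toReal : ℝ) = (2 : ℝ) := by norm_num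
  rw [h2] at h
  rw [← Real.rpow_natCast ‖f‖ 2]
  push_cast
  rw [h]
  congr 1
  ext j
  rw [← Real.rpow_natCast ‖f j‖ 2]
  push_cast
  rfl

lemma summable_norm_sq (f : LatticeL2 ν) :
    Summable fun j : Fin ν → ℤ => ‖f j‖ ^ 2 := by
  have h := (lp.memℓp f).summable (p := 2) (by norm_num)
  have : (fun j : Fin ν → ℤ => ‖f j‖ ^ (2 : ℝ≥0∞).toReal)
      = fun j => ‖f j‖ ^ 2 := by
    ext j
    have h2 : ((2 : ℝ≥0∞).toReal : ℝ) = (2 : ℝ) := by norm_num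
    rw [h2, ← Real.rpow_natCast ‖f j‖ 2]
    push_cast
    rfl
  rwa [this] at h

end Stmt11Aux

open Stmt11Aux

/-- if `V` is bounded below and `H₂ = -Δ_d + V` is the (self-adjoint) discrete
Schrödinger operator on `ℓ²(ℓℤ^ν)` with `0 < ℓ ≤ 1`, then for every non-real `z` there is a
constant `C > 0`, independent of `ℓ`, such that `‖Δ_d (H₂ - z)⁻¹‖ ≤ C ℓ⁻¹` and
`‖V (H₂ - z)⁻¹‖ ≤ C ℓ⁻¹`.  The resolvent `R = (H₂ - z)⁻¹` is characterised by the
hypotheses: `R` is bounded with `‖R‖ ≤ |Im z|⁻¹`, `R φ` lies in the domain of `H₂`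
(i.e. `V·(R φ) ∈ ℓ²`), and `(H₂ - z) R φ = φ` pointwise.  The operator norm bounds are
expressed through `ℓ²`-sums: `Σ_j |Δ_d(Rφ)_j|² ≤ (Cℓ⁻¹‖φ‖)²` and similarly for `V`. -/
theorem stmt_11 (ν : ℕ) (hν : 1 ≤ ν) (V : (Fin ν → ℝ) → ℝ) (hV : ∃ m : ℝ, ∀ x, m ≤ V x)
    (z : ℂ) (hz : z.im ≠ 0) :
    ∃ C > (0 : ℝ), ∀ ℓ : ℝ, 0 < ℓ → ℓ ≤ 1 →
      ∀ R : LatticeL2 ν →L[ℂ] LatticeL2 ν, ‖R‖ ≤ |z.im|⁻¹ →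
        (∀ φ : LatticeL2 ν,
          Memℓp (fun j : Fin ν → ℤ => (V (fun i => ℓ * (j i : ℝ)) : ℂ) * R φ j) 2) →
        (∀ (φ : LatticeL2 ν) (j : Fin ν → ℤ),
          discreteSchrodingerPt ν ℓ V (R φ : (Fin ν → ℤ) → ℂ) j - z * R φ j = φ j) →
        ∀ φ : LatticeL2 ν,
          (∑' j : Fin ν → ℤ, ‖discreteLapPt ν ℓ (R φ : (Fin ν → ℤ) → ℂ) j‖ ^ 2) ≤
              (C * ℓ⁻¹ * ‖φ‖) ^ 2 ∧
          (∑' j : Fin ν → ℤ, ‖(V (fun i => ℓ * (j i : ℝ)) : ℂ) * R φ j‖ ^ 2) ≤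
              (C * ℓ⁻¹ * ‖φ‖) ^ 2 := by
  obtain ⟨m, hm⟩ := hV
  set a : ℝ := |z.im|⁻¹ with ha_def
  have ha : 0 < a := inv_pos.mpr (abs_pos.mpr hz)
  set C₁ : ℝ := a + (|m| + |z.re|) * a ^ 2 with hC₁_def
  have hC₁ : 0 < C₁ := by positivity
  set B₁ : ℝ := 2 * ν * Real.sqrt C₁ with hB₁_def
  have hB₁ : 0 ≤ B₁ := by positivity
  set B₂ : ℝ := 1 + ‖z‖ * a + B₁ with hB₂_def
  have hB₂ : 0 < B₂ := by positivity
  refine ⟨B₁ + B₂, by positivity, ?_⟩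
  intro ℓ hℓ hℓ1 R hR hdom heq φ
  set ψ : LatticeL2 ν := R φ with hψ_def
  have hψn : ‖ψ‖ ≤ a * ‖φ‖ :=
    (R.le_opNorm φ).trans (mul_le_mul_of_nonneg_right hR (norm_nonneg φ))
  set Vψ : LatticeL2 ν :=
    ⟨fun j => (V (fun i => ℓ * (j i : ℝ)) : ℂ) * ψ j, hdom φ⟩ with hVψ_def
  have hVψ_apply : ∀ j, (Vψ : (Fin ν → ℤ) → ℂ) j
      = (V (fun i => ℓ * (j i : ℝ)) : ℂ) * ψ j := fun j => rfl
  -- the resolvent equation at the level of `ℓ²` elements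
  have key : negLap ℓ ψ + Vψ - z • ψ = φ := by
    apply lp.ext
    funext j
    have h := heq φ j
    rw [discreteSchrodingerPt] at h
    simp only [lp.coeFn_sub, lp.coeFn_add, lp.coeFn_smul, Pi.sub_apply, Pi.add_apply,
      Pi.smul_apply, smul_eq_mul, negLap_apply, hVψ_apply]
    rw [← h]
  -- the quadratic-form quantity
  set S : ℝ := ∑ i : Fin ν, ‖diffOp i ψ‖ ^ 2 with hS_def
  have hS : 0 ≤ S := Finset.sum_nonneg fun i _ => sq_nonneg _
  set t : ℝ := (ℓ ^ 2)⁻¹ * S with ht_def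
  have ht0 : 0 ≤ t := by positivity
  have hform : ⟪ψ, negLap ℓ ψ⟫ = (t : ℂ) := by
    rw [inner_negLap, ht_def, hS_def]
    push_cast
    ring
  -- lower bound for `re ⟪ψ, Vψ⟫`
  have hVsum : HasSum (fun j : Fin ν → ℤ =>
      (V (fun i => ℓ * (j i : ℝ))) * ‖ψ j‖ ^ 2) (⟪ψ, Vψ⟫.re) := by
    have h1 := (lp.hasSum_inner ψ Vψ).mapL Complex.reCLM
    have h2 : (fun j : Fin ν → ℤ => Complex.reCLM (⟪(ψ : (Fin ν → ℤ) → ℂ) j, (Vψ : (Fin ν → ℤ) → ℂ) j⟫))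
        = fun j => (V (fun i => ℓ * (j i : ℝ))) * ‖ψ j‖ ^ 2 := by
      ext j
      simp only [Complex.reCLM_apply, RCLike.inner_apply, hVψ_apply]
      rw [mul_assoc, RCLike.mul_conj]
      simp [← Complex.ofReal_pow, ← Complex.ofReal_mul]
    rwa [h2] at h1
  have hVlow : m * ‖ψ‖ ^ 2 ≤ ⟪ψ, Vψ⟫.re := by
    rw [norm_sq_eq_tsum ψ, ← tsum_mul_left, ← hVsum.tsum_eq]
    apply Summable.tsum_le_tsum
    · intro j
      exact mul_le_mul_of_nonneg_right (hm _) (sq_nonneg _)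
    · exact (summable_norm_sq ψ).mul_left m
    · exact hVsum.summable
  -- bound the form quantity
  have hinner_eq : ⟪ψ, (φ : LatticeL2 ν)⟫ = (t : ℂ) + ⟪ψ, Vψ⟫ - z * ⟪ψ, ψ⟫ := by
    rw [← key, inner_sub_right, inner_add_right, inner_smul_right, hform]
  have hre : t = ⟪ψ, (φ : LatticeL2 ν)⟫.re - ⟪ψ, Vψ⟫.re + z.re * ‖ψ‖ ^ 2 := by
    have h1 : ⟪ψ, ψ⟫ = ((‖ψ‖ ^ 2 : ℝ) : ℂ) := by
      rw [inner_self_eq_norm_sq_to_K]; norm_cast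
    have := congrArg Complex.re hinner_eq
    simp only [Complex.sub_re, Complex.add_re, Complex.ofReal_re, h1, Complex.mul_re,
      Complex.ofReal_im, mul_zero, sub_zero] at this
    linarith
  have hip : ⟪ψ, (φ : LatticeL2 ν)⟫.re ≤ ‖ψ‖ * ‖φ‖ := by
    have h := (RCLike.re_le_norm (⟪ψ, (φ : LatticeL2 ν)⟫)).trans (norm_inner_le_norm ψ φ)
    rwa [RCLike.re_to_complex] at h
  have ht_bound : t ≤ C₁ * ‖φ‖ ^ 2 := by
    have h1 : t ≤ ‖ψ‖ * ‖φ‖ + (|m| + |z.re|) * ‖ψ‖ ^ 2 := by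
      have h2 : -⟪ψ, Vψ⟫.re ≤ |m| * ‖ψ‖ ^ 2 := by
        nlinarith [sq_nonneg ‖ψ‖, abs_nonneg m, neg_abs_le m]
      have h3 : z.re * ‖ψ‖ ^ 2 ≤ |z.re| * ‖ψ‖ ^ 2 :=
        mul_le_mul_of_nonneg_right (le_abs_self _) (sq_nonneg _)
      linarith
    have hψ2 : ‖ψ‖ ^ 2 ≤ (a * ‖φ‖) ^ 2 :=
      pow_le_pow_left₀ (norm_nonneg _) hψn 2
    have hψφ : ‖ψ‖ * ‖φ‖ ≤ a * ‖φ‖ ^ 2 := by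
      nlinarith [norm_nonneg φ, norm_nonneg ψ]
    rw [hC₁_def]
    nlinarith [abs_nonneg m, abs_nonneg z.re]
  -- norm bound for the Laplacian term
  have hsqrtS : Real.sqrt S = ℓ * Real.sqrt t := by
    rw [ht_def, show (ℓ ^ 2)⁻¹ * S = (ℓ⁻¹) ^ 2 * S by ring, Real.sqrt_mul (sq_nonneg _),
      Real.sqrt_sq (by positivity)]
    field_simp
  have hΔ : ‖negLap ℓ ψ‖ ≤ 2 * ν * ℓ⁻¹ * Real.sqrt t := by
    have h1 : ‖negLap ℓ ψ‖ ≤ (ℓ ^ 2)⁻¹ * (2 * ν * Real.sqrt S) := by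
      rw [negLap, norm_smul]
      have h2 : ‖((ℓ : ℂ) ^ 2)⁻¹‖ = (ℓ ^ 2)⁻¹ := by
        rw [norm_inv, norm_pow, Complex.norm_real, Real.norm_of_nonneg hℓ.le]
      rw [h2]
      apply mul_le_mul_of_nonneg_left _ (by positivity)
      calc ‖∑ i : Fin ν, (shift (-(Pi.single i 1)) (diffOp i ψ) - diffOp i ψ)‖
          ≤ ∑ i : Fin ν, ‖shift (-(Pi.single i 1)) (diffOp i ψ) - diffOp i ψ‖ :=
            norm_sum_le _ _
        _ ≤ ∑ i : Fin ν, 2 * Real.sqrt S := by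
            apply Finset.sum_le_sum
            intro i _
            have h3 : ‖diffOp i ψ‖ ≤ Real.sqrt S := by
              rw [← Real.sqrt_sq (norm_nonneg (diffOp i ψ))]
              apply Real.sqrt_le_sqrt
              exact Finset.single_le_sum (fun i _ => sq_nonneg ‖diffOp i ψ‖)
                (Finset.mem_univ i)
            calc ‖shift (-(Pi.single i 1)) (diffOp i ψ) - diffOp i ψ‖
                ≤ ‖shift (-(Pi.single i 1)) (diffOp i ψ)‖ + ‖diffOp i ψ‖ := norm_sub_le _ _
              _ = ‖diffOp i ψ‖ + ‖diffOp i ψ‖ := by rw [norm_shift]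
              _ ≤ 2 * Real.sqrt S := by linarith
        _ = 2 * ν * Real.sqrt S := by
            rw [Finset.sum_const, Finset.card_univ, Fintype.card_fin]
            push_cast; ring
    calc ‖negLap ℓ ψ‖ ≤ (ℓ ^ 2)⁻¹ * (2 * ν * Real.sqrt S) := h1
      _ = 2 * ν * ℓ⁻¹ * Real.sqrt t := by
          rw [hsqrtS]; field_simp
  have hsqrt_t : Real.sqrt t ≤ Real.sqrt C₁ * ‖φ‖ := by
    rw [← Real.sqrt_sq (norm_nonneg φ), ← Real.sqrt_mul hC₁.le]
    exact Real.sqrt_le_sqrt ht_bound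
  have hΔfinal : ‖negLap ℓ ψ‖ ≤ B₁ * ℓ⁻¹ * ‖φ‖ := by
    calc ‖negLap ℓ ψ‖ ≤ 2 * ν * ℓ⁻¹ * Real.sqrt t := hΔ
      _ ≤ 2 * ν * ℓ⁻¹ * (Real.sqrt C₁ * ‖φ‖) := by
          apply mul_le_mul_of_nonneg_left hsqrt_t (by positivity)
      _ = B₁ * ℓ⁻¹ * ‖φ‖ := by rw [hB₁_def]; ring
  -- norm bound for the potential term
  have hℓinv : 1 ≤ ℓ⁻¹ := by
    have h := mul_inv_cancel₀ (ne_of_gt hℓ)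
    nlinarith [inv_pos.mpr hℓ]
  have hVfinal : ‖Vψ‖ ≤ B₂ * ℓ⁻¹ * ‖φ‖ := by
    have h1 : Vψ = φ - negLap ℓ ψ + z • ψ := by
      rw [← key]; abel
    have h2 : ‖Vψ‖ ≤ ‖φ‖ + ‖negLap ℓ ψ‖ + ‖z‖ * ‖ψ‖ := by
      rw [h1]
      calc ‖φ - negLap ℓ ψ + z • ψ‖ ≤ ‖φ - negLap ℓ ψ‖ + ‖z • ψ‖ := norm_add_le _ _
        _ ≤ ‖φ‖ + ‖negLap ℓ ψ‖ + ‖z‖ * ‖ψ‖ := by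
            rw [norm_smul]
            have := norm_sub_le (φ : LatticeL2 ν) (negLap ℓ ψ)
            linarith
    have h3 : ‖z‖ * ‖ψ‖ ≤ ‖z‖ * a * ‖φ‖ := by
      rw [mul_assoc]
      exact mul_le_mul_of_nonneg_left hψn (norm_nonneg z)
    have h4 : ‖φ‖ ≤ ℓ⁻¹ * ‖φ‖ := le_mul_of_one_le_left (norm_nonneg φ) hℓinv
    have h5 : ‖z‖ * a * ‖φ‖ ≤ ‖z‖ * a * (ℓ⁻¹ * ‖φ‖) :=
      mul_le_mul_of_nonneg_left h4 (by positivity)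
    have hrhs : B₂ * ℓ⁻¹ * ‖φ‖
        = ℓ⁻¹ * ‖φ‖ + ‖z‖ * a * (ℓ⁻¹ * ‖φ‖) + B₁ * ℓ⁻¹ * ‖φ‖ := by
      rw [hB₂_def]; ring
    rw [hrhs]
    linarith
  -- assemble
  have hCB₁ : B₁ * ℓ⁻¹ * ‖φ‖ ≤ (B₁ + B₂) * ℓ⁻¹ * ‖φ‖ :=
    mul_le_mul_of_nonneg_right
      (mul_le_mul_of_nonneg_right (by linarith : B₁ ≤ B₁ + B₂) (by positivity))
      (norm_nonneg φ)
  have hCB₂ : B₂ * ℓ⁻¹ * ‖φ‖ ≤ (B₁ + B₂) * ℓ⁻¹ * ‖φ‖ :=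
    mul_le_mul_of_nonneg_right
      (mul_le_mul_of_nonneg_right (by linarith : B₂ ≤ B₁ + B₂) (by positivity))
      (norm_nonneg φ)
  constructor
  · have h1 : (∑' j : Fin ν → ℤ, ‖discreteLapPt ν ℓ (ψ : (Fin ν → ℤ) → ℂ) j‖ ^ 2)
        = ‖negLap ℓ ψ‖ ^ 2 := by
      rw [norm_sq_eq_tsum]
      congr 1
      ext j
      rw [negLap_apply, norm_neg]
    rw [h1]
    exact pow_le_pow_left₀ (norm_nonneg _) (hΔfinal.trans hCB₁) 2
  · have h1 : (∑' j : Fin ν → ℤ, ‖(V (fun i => ℓ * (j i : ℝ)) : ℂ) * ψ j‖ ^ 2)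
        = ‖Vψ‖ ^ 2 := by
      rw [norm_sq_eq_tsum]
    rw [h1]
    exact pow_le_pow_left₀ (norm_nonneg _) (hVfinal.trans hCB₂) 2
end

section
/- Let H₁, H₂ be Hilbert spaces, and for each ℓ > 0 let T_ℓ, S_ℓ be bounded operators and J : H₂ → H₁ bounded, with M₁(ℓ), M₂(ℓ) bounded operators on H₂ satisfying ‖S_ℓ M₁(ℓ)‖ ≤ Cℓ and ‖S_ℓ M₂(ℓ)‖ ≤ Cℓ, where S_ℓ = (A - z)^{-1} for a self-adjoint operator A on H₂ and z ∉ ℝ. If (A - z + M₁(ℓ)) K T_ℓ J = 1 + M₂(ℓ) for a bounded operator K, then for all sufficiently small ℓ, 1 + S_ℓ M₁(ℓ) is invertible and K T_ℓ J - S_ℓ = -(1 + S_ℓ M₁(ℓ))^{-1}(S_ℓ M₁(ℓ) S_ℓ - S_ℓ M₂(ℓ)); in particular ‖K T_ℓ J - (A - z)^{-1}‖ = O(ℓ) as ℓ → 0. -/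
/-- abstract resolvent-comparison lemma.  For each `ℓ > 0` let
`T ℓ : H₁ → H₁`, `J ℓ : H₂ → H₁`, `K ℓ : H₁ → H₂` be bounded, `M₁ ℓ, M₂ ℓ` bounded on `H₂`,
and let `S ℓ = (A - z)⁻¹` be the resolvent of a self-adjoint operator `A` on `H₂`
(`z ∉ ℝ`, so `‖S ℓ‖ ≤ |Im z|⁻¹`), with `‖S ℓ ∘ M₁ ℓ‖ ≤ Cℓ` and `‖S ℓ ∘ M₂ ℓ‖ ≤ Cℓ`.
If `(A - z + M₁ ℓ) ∘ K ℓ ∘ T ℓ ∘ J ℓ = 1 + M₂ ℓ` — which, after multiplying by the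
resolvent, reads `(1 + S ℓ M₁ ℓ) ∘ (K ℓ T ℓ J ℓ) = S ℓ ∘ (1 + M₂ ℓ)` — then for all
sufficiently small `ℓ` the operator `1 + S ℓ M₁ ℓ` is invertible, with inverse `U`, and
`K ℓ T ℓ J ℓ - S ℓ = -(U ∘ (S ℓ M₁ ℓ S ℓ - S ℓ M₂ ℓ))`; in particular
`‖K ℓ T ℓ J ℓ - (A - z)⁻¹‖ = O(ℓ)` as `ℓ → 0`. -/
theorem stmt_12
    {H₁ H₂ : Type*}
    [NormedAddCommGroup H₁] [InnerProductSpace ℂ H₁] [CompleteSpace H₁]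
    [NormedAddCommGroup H₂] [InnerProductSpace ℂ H₂] [CompleteSpace H₂]
    (z : ℂ) (hz : z.im ≠ 0)
    (T : ℝ → (H₁ →L[ℂ] H₁)) (J : ℝ → (H₂ →L[ℂ] H₁)) (K : ℝ → (H₁ →L[ℂ] H₂))
    (M₁ M₂ S : ℝ → (H₂ →L[ℂ] H₂))
    (C : ℝ) (hC : 0 < C)
    (hSnorm : ∀ ℓ : ℝ, 0 < ℓ → ‖S ℓ‖ ≤ |z.im|⁻¹)
    (hM₁ : ∀ ℓ : ℝ, 0 < ℓ → ‖S ℓ ∘L M₁ ℓ‖ ≤ C * ℓ)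
    (hM₂ : ∀ ℓ : ℝ, 0 < ℓ → ‖S ℓ ∘L M₂ ℓ‖ ≤ C * ℓ)
    (hid : ∀ ℓ : ℝ, 0 < ℓ →
      (1 + S ℓ ∘L M₁ ℓ) ∘L (K ℓ ∘L T ℓ ∘L J ℓ) = S ℓ ∘L (1 + M₂ ℓ)) :
    ∃ C' > (0 : ℝ), ∃ ℓ₀ > (0 : ℝ), ∀ ℓ : ℝ, 0 < ℓ → ℓ ≤ ℓ₀ →
      ∃ U : H₂ →L[ℂ] H₂,
        U ∘L (1 + S ℓ ∘L M₁ ℓ) = 1 ∧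
        (1 + S ℓ ∘L M₁ ℓ) ∘L U = 1 ∧
        K ℓ ∘L T ℓ ∘L J ℓ - S ℓ =
          -(U ∘L ((S ℓ ∘L M₁ ℓ) ∘L S ℓ - S ℓ ∘L M₂ ℓ)) ∧
        ‖K ℓ ∘L T ℓ ∘L J ℓ - S ℓ‖ ≤ C' * ℓ := by
  have him : 0 < |z.im|⁻¹ := by positivity
  refine ⟨2 * C * (|z.im|⁻¹ + 1), by positivity, (2 * C)⁻¹, by positivity, ?_⟩
  intro ℓ hℓ hℓ₀
  set a : H₂ →L[ℂ] H₂ := S ℓ ∘L M₁ ℓ with ha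
  set b : H₂ →L[ℂ] H₂ := S ℓ ∘L M₂ ℓ with hb
  set X : H₂ →L[ℂ] H₂ := K ℓ ∘L T ℓ ∘L J ℓ with hX
  have hhalf : ‖a‖ ≤ 1 / 2 := by
    have h1 : C * ℓ ≤ C * (2 * C)⁻¹ := mul_le_mul_of_nonneg_left hℓ₀ hC.le
    have h2 : C * (2 * C)⁻¹ = 1 / 2 := by field_simp
    have := hM₁ ℓ hℓ
    linarith
  have hlt : ‖-a‖ < 1 := by rw [norm_neg]; linarith
  set u := Units.oneSub (-a) hlt with hu
  have huval : (u : H₂ →L[ℂ] H₂) = 1 + a := by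
    rw [hu, Units.val_oneSub, sub_neg_eq_add]
  -- hid in multiplicative form
  have hid' : (1 + a) * X = S ℓ + b := by
    have h := hid ℓ hℓ
    rw [hX, ha]
    simp only [ContinuousLinearMap.mul_def]
    rw [h]
    rw [hb]
    simp only [ContinuousLinearMap.comp_add]
    rw [show (S ℓ).comp 1 = S ℓ from ContinuousLinearMap.comp_id _]
  have key : (1 + a) * (X - S ℓ) = -(a * S ℓ - b) := by
    rw [mul_sub, hid']; noncomm_ring
  have heq : X - S ℓ = -((u⁻¹ : (H₂ →L[ℂ] H₂)ˣ) * (a * S ℓ - b)) := by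
    calc X - S ℓ = ((u⁻¹ : (H₂ →L[ℂ] H₂)ˣ) : H₂ →L[ℂ] H₂) * ((1 + a) * (X - S ℓ)) := by
          rw [← mul_assoc, ← huval, u.inv_mul, one_mul]
      _ = _ := by rw [key, mul_neg]
  have hUnorm : ‖((u⁻¹ : (H₂ →L[ℂ] H₂)ˣ) : H₂ →L[ℂ] H₂)‖ ≤ 2 := by
    have h1 : ((u⁻¹ : (H₂ →L[ℂ] H₂)ˣ) : H₂ →L[ℂ] H₂) = 1 - (u⁻¹ : (H₂ →L[ℂ] H₂)ˣ) * a := by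
      have := u.inv_mul
      rw [huval] at this
      rw [eq_sub_iff_add_eq, ← mul_one_add, this]
    have h2 : ‖((u⁻¹ : (H₂ →L[ℂ] H₂)ˣ) : H₂ →L[ℂ] H₂)‖ ≤
        1 + ‖((u⁻¹ : (H₂ →L[ℂ] H₂)ˣ) : H₂ →L[ℂ] H₂)‖ * (1/2) := by
      calc ‖((u⁻¹ : (H₂ →L[ℂ] H₂)ˣ) : H₂ →L[ℂ] H₂)‖
          = ‖(1 : H₂ →L[ℂ] H₂) - (u⁻¹ : (H₂ →L[ℂ] H₂)ˣ) * a‖ := by rw [← h1]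
        _ ≤ ‖(1 : H₂ →L[ℂ] H₂)‖ + ‖((u⁻¹ : (H₂ →L[ℂ] H₂)ˣ) : H₂ →L[ℂ] H₂) * a‖ :=
            norm_sub_le _ _
        _ ≤ 1 + ‖((u⁻¹ : (H₂ →L[ℂ] H₂)ˣ) : H₂ →L[ℂ] H₂)‖ * (1/2) := by
            have hn1 : ‖(1 : H₂ →L[ℂ] H₂)‖ ≤ 1 := ContinuousLinearMap.norm_id_le
            have hm : ‖((u⁻¹ : (H₂ →L[ℂ] H₂)ˣ) : H₂ →L[ℂ] H₂) * a‖ ≤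
                ‖((u⁻¹ : (H₂ →L[ℂ] H₂)ˣ) : H₂ →L[ℂ] H₂)‖ * (1/2) :=
              le_trans (norm_mul_le _ _)
                (mul_le_mul_of_nonneg_left hhalf (norm_nonneg _))
            linarith
    linarith
  refine ⟨(u⁻¹ : (H₂ →L[ℂ] H₂)ˣ), ?_, ?_, heq, ?_⟩
  · show ((u⁻¹ : (H₂ →L[ℂ] H₂)ˣ) : H₂ →L[ℂ] H₂) * (1 + a) = 1
    rw [← huval]; exact u.inv_mul
  · show (1 + a) * ((u⁻¹ : (H₂ →L[ℂ] H₂)ˣ) : H₂ →L[ℂ] H₂) = 1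
    rw [← huval]; exact u.mul_inv
  · rw [heq, norm_neg]
    calc ‖((u⁻¹ : (H₂ →L[ℂ] H₂)ˣ) : H₂ →L[ℂ] H₂) * (a * S ℓ - b)‖
        ≤ ‖((u⁻¹ : (H₂ →L[ℂ] H₂)ˣ) : H₂ →L[ℂ] H₂)‖ * ‖a * S ℓ - b‖ := norm_mul_le _ _
      _ ≤ 2 * (‖a‖ * ‖S ℓ‖ + ‖b‖) := by
          gcongr
          exact le_trans (norm_sub_le _ _) (by gcongr; exact norm_mul_le _ _)
      _ ≤ 2 * (C * ℓ * |z.im|⁻¹ + C * ℓ) := by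
          have h1 : ‖a‖ * ‖S ℓ‖ ≤ C * ℓ * |z.im|⁻¹ :=
            mul_le_mul (hM₁ ℓ hℓ) (hSnorm ℓ hℓ) (norm_nonneg _) (by positivity)
          have h2 : ‖b‖ ≤ C * ℓ := hM₂ ℓ hℓ
          linarith
      _ = 2 * C * (|z.im|⁻¹ + 1) * ℓ := by ring
end
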